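/- Let X be a continuum (a nonempty compact connected metric space), let N be a positive integer, and let a_1, …, a_N ∈ X be points such that X is irreducible about the set {a_1, …, a_N}, i.e., no proper subcontinuum of X contains all of a_1, …, a_N. Then for every subcontinuum Y of X, the set X ∖ Y has at most N connected components. -/

import Mathlib

open Set Topology

/-- Šura-Bura: in a compact Hausdorff space, if the connected component of `x` is contained
in an open set `U`, there is a clopen set between them. -/
lemma exists_isClopen_between {Z : Type*} [TopologicalSpace Z] [T2Space Z] [CompactSpace Z]
    (x : Z) {U : Set Z} (hU : IsOpen U) (h : connectedComponent x ⊆ U) :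
    ∃ W : Set Z, IsClopen W ∧ x ∈ W ∧ W ⊆ U := by
  have H1 := hU.isClosed_compl.isCompact.inter_iInter_nonempty
    (fun s : { s : Set Z // IsClopen s ∧ x ∈ s } => (s : Set Z)) fun s => s.2.1.1
  rw [← not_disjoint_iff_nonempty_inter, imp_not_comm, not_forall] at H1
  have hdis : Disjoint Uᶜ (⋂ s : { s : Set Z // IsClopen s ∧ x ∈ s }, (s : Set Z)) := by
    rw [← connectedComponent_eq_iInter_isClopen]
    exact disjoint_compl_left_iff_subset.2 h
  cases' H1 hdis with si H2
  refine ⟨⋂ s ∈ si, Subtype.val s, isClopen_biInter_finset fun s _ => s.2.1,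
    mem_iInter₂.2 fun s _ => s.2.2, ?_⟩
  rwa [← disjoint_compl_left_iff_subset, disjoint_iff_inter_eq_empty,
    ← not_nonempty_iff_eq_empty]

/-- Boundary bumping for closed sets: if a connected component of a point in a closed set `A`
misses the frontier of `A` (in a compact connected Hausdorff space), then `A` is everything. -/
lemma closed_bump {Z : Type*} [TopologicalSpace Z] [T2Space Z] [CompactSpace Z]
    [PreconnectedSpace Z] {A : Set Z} (hA : IsClosed A) {x : Z} (hx : x ∈ A)
    (h : connectedComponentIn A x ∩ frontier A = ∅) : A = univ := by
  haveI : CompactSpace A := isCompact_iff_compactSpace.mp hA.isCompact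
  -- the component in the subtype
  have hccU : connectedComponent (⟨x, hx⟩ : A) ⊆ Subtype.val ⁻¹' (interior A) := by
    intro z hz
    have hz1 : (z : Z) ∈ connectedComponentIn A x := by
      rw [connectedComponentIn_eq_image hx]
      exact ⟨z, hz, rfl⟩
    have hz2 : (z : Z) ∉ frontier A := fun hf =>
      (eq_empty_iff_forall_notMem.mp h (z : Z)) ⟨hz1, hf⟩
    have hzA : (z : Z) ∈ A := connectedComponentIn_subset A x hz1
    -- A closed : frontier A = A \ interior A
    have : frontier A = A \ interior A := by
      rw [hA.frontier_eq]
    by_contra hzint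
    exact hz2 (this ▸ ⟨hzA, hzint⟩)
  obtain ⟨W, hWclopen, hxW, hWU⟩ := exists_isClopen_between (⟨x, hx⟩ : A)
    (isOpen_interior.preimage continuous_subtype_val) hccU
  have hWcc : connectedComponent (⟨x, hx⟩ : A) ⊆ W :=
    hWclopen.connectedComponent_subset hxW
  -- the image W' is clopen in Z
  set W' := Subtype.val '' W with hW'def
  have hW'closed : IsClosed W' :=
    (hWclopen.isClosed.isCompact.image continuous_subtype_val).isClosed
  have hW'sub : W' ⊆ interior A := by
    rintro _ ⟨w, hw, rfl⟩
    exact hWU hw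
  have hW'open : IsOpen W' := by
    obtain ⟨O, hO, hOW⟩ := isOpen_induced_iff.mp hWclopen.isOpen
    have himg : W' = A ∩ O := by
      ext z
      constructor
      · rintro ⟨w, hw, rfl⟩
        exact ⟨w.2, by rw [← hOW] at hw; exact hw⟩
      · rintro ⟨hzA, hzO⟩
        exact ⟨⟨z, hzA⟩, by rw [← hOW]; exact hzO, rfl⟩
    have : W' = interior A ∩ O := by
      apply Subset.antisymm
      · intro z hz
        exact ⟨hW'sub hz, (himg ▸ hz).2⟩
      · intro z hz
        rw [himg]
        exact ⟨interior_subset hz.1, hz.2⟩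
    rw [this]
    exact isOpen_interior.inter hO
  have hW'univ : W' = univ :=
    IsClopen.eq_univ ⟨hW'closed, hW'open⟩ ⟨x, ⟨⟨x, hx⟩, hxW, rfl⟩⟩
  apply eq_univ_of_univ_subset
  rw [← hW'univ]
  rintro _ ⟨w, _, rfl⟩
  exact w.2

/-- Boundary bumping for open sets: if the closure of a connected component of a point of an
open set `U` stays inside `U` (in a compact connected Hausdorff space), then `U` is everything. -/
lemma open_bump {Z : Type*} [TopologicalSpace Z] [T2Space Z] [CompactSpace Z]
    [PreconnectedSpace Z] {U : Set Z} (hU : IsOpen U) {x : Z} (hx : x ∈ U)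
    (h : closure (connectedComponentIn U x) ⊆ U) : U = univ := by
  obtain ⟨V, hVo, hCV, hVU⟩ := normal_exists_closure_subset isClosed_closure hU h
  set A := closure V with hAdef
  have hAcl : IsClosed A := isClosed_closure
  have hxA : x ∈ A :=
    subset_closure (hCV (subset_closure (mem_connectedComponentIn hx)))
  have hVint : V ⊆ interior A := hVo.subset_interior_iff.mpr subset_closure
  have hDC : connectedComponentIn A x ⊆ connectedComponentIn U x :=
    isPreconnected_connectedComponentIn.subset_connectedComponentIn
      (mem_connectedComponentIn hxA) ((connectedComponentIn_subset A x).trans hVU)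
  have hfront : connectedComponentIn A x ∩ frontier A = ∅ := by
    rw [eq_empty_iff_forall_notMem]
    rintro z ⟨hz1, hz2⟩
    have : z ∈ interior A := hVint (hCV (subset_closure (hDC hz1)))
    exact hz2.2 this
  have : A = univ := closed_bump hAcl hxA hfront
  exact eq_univ_of_univ_subset (this ▸ hVU)

/-- A connected component in `F` is closed in `F`. -/
lemma closure_connectedComponentIn_inter {Z : Type*} [TopologicalSpace Z] {F : Set Z} {y : Z}
    (hy : y ∈ F) :
    closure (connectedComponentIn F y) ∩ F ⊆ connectedComponentIn F y := by
  rintro z ⟨hz1, hz2⟩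
  rw [connectedComponentIn_eq_image hy] at hz1 ⊢
  have : (⟨z, hz2⟩ : F) ∈ closure (connectedComponent (⟨y, hy⟩ : F)) :=
    closure_subtype.mpr hz1
  rw [isClosed_connectedComponent.closure_eq] at this
  exact ⟨⟨z, hz2⟩, this, rfl⟩

/-- Let `X` be a continuum (nonempty compact connected metric space),
`N` a positive integer, and `a 1, …, a N ∈ X` points such that `X` is irreducible about
`{a 1, …, a N}` (no proper subcontinuum of `X` contains all the points `a i`).
Then for every subcontinuum `Y ⊆ X`, the set `X \ Y` has at most `N` connected
components. -/
theorem stmt_0 (X : Type*) [MetricSpace X] [CompactSpace X] [ConnectedSpace X] [Nonempty X]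
    (N : ℕ) (hN : 0 < N) (a : Fin N → X)
    (hirr : ∀ K : Set X, IsCompact K → IsConnected K → Set.range a ⊆ K → K = Set.univ)
    (Y : Set X) (hYc : IsCompact Y) (hYconn : IsConnected Y) :
    {C : Set X | ∃ x ∈ Yᶜ, C = connectedComponentIn Yᶜ x}.encard ≤ (N : ℕ∞) := by
  haveI : NeZero N := ⟨hN.ne'⟩
  obtain ⟨y0, hy0⟩ := hYconn.nonempty
  by_cases hUe : Yᶜ = (∅ : Set X)
  · have hempty : {C : Set X | ∃ x ∈ Yᶜ, C = connectedComponentIn Yᶜ x} = ∅ := by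
      rw [eq_empty_iff_forall_notMem]
      rintro C ⟨x, hx, _⟩
      rw [hUe] at hx
      exact hx
    rw [hempty, Set.encard_empty]
    exact zero_le
  · have hUopen : IsOpen (Yᶜ) := hYc.isClosed.isOpen_compl
    have hUne : Yᶜ ≠ (univ : Set X) := by
      intro hc
      exact (hc ▸ mem_univ y0 : y0 ∈ Yᶜ) hy0
    -- key claim: every component of Yᶜ contains some a i
    have key : ∀ x ∈ Yᶜ, ∃ i : Fin N, a i ∈ Yᶜ ∧ x ∈ connectedComponentIn Yᶜ (a i) := by
      intro x hx
      set K := Y ∪ ⋃ i : Fin N, closure (connectedComponentIn Yᶜ (a i)) with hKdef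
      have hKcomp : IsCompact K :=
        hYc.union (isCompact_iUnion fun i => isClosed_closure.isCompact)
      have hpiece : ∀ i : Fin N,
          IsPreconnected (Y ∪ closure (connectedComponentIn Yᶜ (a i))) := by
        intro i
        by_cases hi : a i ∈ Yᶜ
        · have h1 : (closure (connectedComponentIn Yᶜ (a i)) ∩ Y).Nonempty := by
            by_contra hne
            rw [not_nonempty_iff_eq_empty] at hne
            have hsub : closure (connectedComponentIn Yᶜ (a i)) ⊆ Yᶜ := by
              intro z hz
              by_contra hzU
              exact (eq_empty_iff_forall_notMem.mp hne z) ⟨hz, not_not.mp hzU⟩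
            exact hUne (open_bump hUopen hi hsub)
          obtain ⟨z, hz1, hz2⟩ := h1
          exact IsPreconnected.union z hz2 hz1 hYconn.isPreconnected
            isPreconnected_connectedComponentIn.closure
        · rw [connectedComponentIn_eq_empty hi, closure_empty, union_empty]
          exact hYconn.isPreconnected
      have hKeq : K = ⋃ i : Fin N, (Y ∪ closure (connectedComponentIn Yᶜ (a i))) := by
        rw [hKdef, union_iUnion]
      have hKconn : IsPreconnected K := by
        rw [hKeq]
        apply isPreconnected_iUnion
        · exact ⟨y0, mem_iInter.mpr fun i => Or.inl hy0⟩
        · exact hpiece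
      have hKrange : Set.range a ⊆ K := by
        rintro _ ⟨i, rfl⟩
        by_cases hi : a i ∈ Yᶜ
        · exact Or.inr (mem_iUnion.mpr ⟨i, subset_closure (mem_connectedComponentIn hi)⟩)
        · exact Or.inl (not_not.mp hi)
      have hKuniv : K = univ := hirr K hKcomp ⟨⟨y0, Or.inl hy0⟩, hKconn⟩ hKrange
      have hxK : x ∈ K := hKuniv ▸ mem_univ x
      rcases hxK with hxY | hxU
      · exact absurd hxY hx
      · obtain ⟨i, hi⟩ := mem_iUnion.mp hxU
        have hai : a i ∈ Yᶜ := by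
          by_contra hai
          rw [connectedComponentIn_eq_empty hai, closure_empty] at hi
          exact hi
        exact ⟨i, hai, closure_connectedComponentIn_inter hai ⟨hi, hx⟩⟩
    have hsub : {C : Set X | ∃ x ∈ Yᶜ, C = connectedComponentIn Yᶜ x}
        ⊆ (fun i => connectedComponentIn Yᶜ (a i)) '' (univ : Set (Fin N)) := by
      rintro C ⟨x, hx, rfl⟩
      obtain ⟨i, _, hxi⟩ := key x hx
      exact ⟨i, mem_univ i, connectedComponentIn_eq hxi⟩
    calc {C : Set X | ∃ x ∈ Yᶜ, C = connectedComponentIn Yᶜ x}.encard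
        ≤ ((fun i => connectedComponentIn Yᶜ (a i)) '' (univ : Set (Fin N))).encard :=
          Set.encard_mono hsub
      _ ≤ (univ : Set (Fin N)).encard := Set.encard_image_le _ _
      _ = (N : ℕ∞) := by simp [Set.encard_univ]
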